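/- arXiv:2106.14393 — 2 statements merged into one kernel-verified Lean document; each statement's English description precedes it below -/
import Mathlib

section
/- Let A be a real invertible d×d matrix. Then for all r_1, r_2 > 0, the d-dimensional Lebesgue measure satisfies 𝓛_d( (A^{−1} B_{ℝ^d}(0, r_1)) ∩ B_{ℝ^d}(0, r_2) ) ≤ 2^d · min{ r_1^k r_2^{d−k} / φ^k(A) : k = 0, 1, …, d }. -/
open MeasureTheory Filter Set Metric
open scoped Topology ENNReal NNReal Matrix RealInnerProductSpace

noncomputable section

namespace IFSPaper

/-- `ℝ^d` with the Euclidean norm. -/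
abbrev Euc (d : ℕ) : Type := EuclideanSpace ℝ (Fin d)

/-- The symbolic space `Σ = {1,…,ℓ}^ℕ`. -/
abbrev Seq (ℓ : ℕ) : Type := ℕ → Fin ℓ

abbrev Mat (d : ℕ) : Type := Matrix (Fin d) (Fin d) ℝ

/-- The left shift map `σ` on `Σ`. -/
def shiftMap {ℓ : ℕ} (x : Seq ℓ) : Seq ℓ := fun k => x (k + 1)

/-- The initial word `x|n` of a sequence `x`. -/
def prefixWord {ℓ : ℕ} (x : Seq ℓ) (n : ℕ) : List (Fin ℓ) := List.ofFn fun k : Fin n => x k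

/-- For a word `I = i₁…iₙ`, the composition `f_I = f_{i₁} ∘ ⋯ ∘ f_{iₙ}`. -/
def wordComp {ℓ : ℕ} {α : Type*} (f : Fin ℓ → α → α) : List (Fin ℓ) → α → α
  | [] => id
  | i :: w => f i ∘ wordComp f w

/-- The Jacobian matrix of `f_I` at `y`, computed from the Jacobians `Df` of the
individual maps via the chain rule. -/
def wordDeriv {ℓ d : ℕ} (f : Fin ℓ → Euc d → Euc d) (Df : Fin ℓ → Euc d → Mat d) :
    List (Fin ℓ) → Euc d → Mat d
  | [], _ => 1
  | i :: w, y => Df i (wordComp f w y) * wordDeriv f Df w y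

/-- The coding map `Π(x) = lim_n f_{x₁} ∘ ⋯ ∘ f_{xₙ} (0)` of an IFS. -/
def codingMap {ℓ d : ℕ} (f : Fin ℓ → Euc d → Euc d) (x : Seq ℓ) : Euc d :=
  limUnder atTop fun n => wordComp f (prefixWord x n) 0

/-- The singular values `α₁(A) ≥ α₂(A) ≥ … ≥ α_d(A)` of a `d × d` real matrix, in
decreasing order (indexed from `0`). -/
def singVals {d : ℕ} (A : Mat d) : Fin d → ℝ := fun k =>
  let v : Fin d → ℝ := fun m =>
    Real.sqrt ((show (Aᵀ * A).IsHermitian by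
      simpa using Matrix.isHermitian_conjTranspose_mul_self A).eigenvalues m)
  v (Tuple.sort v k.rev)

/-- The singular value function `φ^s(A)`. -/
def svf {d : ℕ} (s : ℝ) (A : Mat d) : ℝ :=
  if s < (d : ℝ) then
    ∏ k : Fin d,
      (if (k : ℕ) < ⌊s⌋₊ then singVals A k
       else if (k : ℕ) = ⌊s⌋₊ then singVals A k ^ (s - (⌊s⌋₊ : ℝ)) else 1)
  else |A.det| ^ (s / (d : ℝ))

/-- A matrix viewed as a continuous linear map on Euclidean space. -/
def matCLM {d : ℕ} (A : Mat d) : Euc d →L[ℝ] Euc d := Matrix.toEuclideanCLM (𝕜 := ℝ) A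

/-- The operator norm of a matrix (= its largest singular value). -/
def opNorm {d : ℕ} (A : Mat d) : ℝ := ‖matCLM A‖

variable {d : ℕ}

lemma matCLM_mulVec (A : Mat d) (x : Euc d) (i : Fin d) :
    matCLM A x i = (A *ᵥ (x : Fin d → ℝ)) i := by
  rfl

lemma matCLM_eigen (A : Mat d) (i : Fin d) :
    matCLM (Aᴴ * A) ((Matrix.isHermitian_conjTranspose_mul_self A).eigenvectorBasis i) =
      (Matrix.isHermitian_conjTranspose_mul_self A).eigenvalues i •
        (Matrix.isHermitian_conjTranspose_mul_self A).eigenvectorBasis i := by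
  set H := Matrix.isHermitian_conjTranspose_mul_self A
  ext j
  rw [matCLM_mulVec]
  have := congrFun (H.mulVec_eigenvectorBasis i) j
  simpa using this

lemma adjoint_matCLM (A : Mat d) :
    ContinuousLinearMap.adjoint (matCLM A) = matCLM Aᴴ := by
  rw [← ContinuousLinearMap.star_eq_adjoint]
  show star (Matrix.toEuclideanCLM (𝕜 := ℝ) A) = Matrix.toEuclideanCLM (𝕜 := ℝ) Aᴴ
  rw [← map_star]
  congr 1

lemma key_norm_sq (A : Mat d) (x : Euc d) :
    ‖matCLM A x‖ ^ 2 =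
      ∑ i, (Matrix.isHermitian_conjTranspose_mul_self A).eigenvalues i *
        ((Matrix.isHermitian_conjTranspose_mul_self A).eigenvectorBasis.repr x i) ^ 2 := by
  set H := Matrix.isHermitian_conjTranspose_mul_self A with hH
  set b := H.eigenvectorBasis with hb
  set μ := H.eigenvalues with hμ
  have hrepr : ∀ i, b.repr (matCLM (Aᴴ * A) x) i = μ i * b.repr x i := by
    intro i
    rw [b.repr_apply_apply, b.repr_apply_apply]
    have h1 : ⟪b i, matCLM (Aᴴ * A) x⟫ = ⟪ContinuousLinearMap.adjoint (matCLM (Aᴴ * A)) (b i), x⟫ :=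
      (ContinuousLinearMap.adjoint_inner_left _ _ _).symm
    rw [h1, adjoint_matCLM, H.eq, matCLM_eigen, real_inner_smul_left]
  have h0 : ‖matCLM A x‖ ^ 2 = ⟪matCLM A x, matCLM A x⟫ := (real_inner_self_eq_norm_sq _).symm
  have h1 : ⟪matCLM A x, matCLM A x⟫ = ⟪matCLM (Aᴴ * A) x, x⟫ := by
    rw [← ContinuousLinearMap.adjoint_inner_left (matCLM A), adjoint_matCLM]
    congr 1
    show (Matrix.toEuclideanCLM (𝕜 := ℝ) Aᴴ) ((Matrix.toEuclideanCLM (𝕜 := ℝ) A) x) = _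
    rw [← ContinuousLinearMap.mul_apply, ← map_mul]
    rfl
  have h2 : ⟪matCLM (Aᴴ * A) x, x⟫ = ⟪b.repr (matCLM (Aᴴ * A) x), b.repr x⟫ :=
    (b.repr.inner_map_map _ _).symm
  rw [h0, h1, h2, PiLp.inner_apply]
  refine Finset.sum_congr rfl fun i _ => ?_
  rw [hrepr i]
  simp [RCLike.inner_apply]
  ring


lemma prod_eigen_eq (A : Mat d) :
    (∏ i, (Matrix.isHermitian_conjTranspose_mul_self A).eigenvalues i) = A.det * A.det := by
  have h := (Matrix.isHermitian_conjTranspose_mul_self A).det_eq_prod_eigenvalues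
  rw [Matrix.det_mul, Matrix.det_conjTranspose, star_trivial, RCLike.ofReal_real_eq_id] at h
  simp only [id_eq] at h
  rw [← h]

lemma eigen_pos (A : Mat d) (hA : IsUnit A.det) (i : Fin d) :
    0 < (Matrix.isHermitian_conjTranspose_mul_self A).eigenvalues i := by
  have hnn : ∀ j, 0 ≤ (Matrix.isHermitian_conjTranspose_mul_self A).eigenvalues j := fun j =>
    (Matrix.posSemidef_conjTranspose_mul_self A).eigenvalues_nonneg j
  have hprod : (∏ j, (Matrix.isHermitian_conjTranspose_mul_self A).eigenvalues j) ≠ 0 := by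
    rw [prod_eigen_eq]
    exact mul_ne_zero hA.ne_zero hA.ne_zero
  have := Finset.prod_ne_zero_iff.1 hprod i (Finset.mem_univ i)
  exact lt_of_le_of_ne (hnn i) (Ne.symm this)

lemma sqrt_prod' {ι : Type*} (s : Finset ι) (f : ι → ℝ) (hf : ∀ i ∈ s, 0 ≤ f i) :
    Real.sqrt (∏ i ∈ s, f i) = ∏ i ∈ s, Real.sqrt (f i) := by
  induction s using Finset.cons_induction with
  | empty => simp
  | cons a s ha ih =>
    rw [Finset.prod_cons, Finset.prod_cons, Real.sqrt_mul (hf a (Finset.mem_cons_self a s)),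
      ih fun i hi => hf i (Finset.mem_cons_of_mem hi)]


lemma box_eq (m : Fin d → ℝ) :
    {y : EuclideanSpace ℝ (Fin d) | ∀ i, |y i| ≤ m i} =
      ((MeasurableEquiv.toLp 2 (Fin d → ℝ)).symm) ⁻¹' (Set.univ.pi fun i => Icc (-(m i)) (m i)) := by
  ext y
  simp only [mem_setOf_eq, mem_preimage, Set.mem_pi, Set.mem_univ, forall_true_left, mem_Icc,
    abs_le]
  rfl

lemma box_measurable (m : Fin d → ℝ) :
    MeasurableSet {y : EuclideanSpace ℝ (Fin d) | ∀ i, |y i| ≤ m i} := by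
  rw [box_eq]
  exact ((MeasurableEquiv.toLp 2 (Fin d → ℝ)).symm).measurable
    (MeasurableSet.univ_pi fun i => measurableSet_Icc)

lemma volume_box (m : Fin d → ℝ) (hm : ∀ i, 0 ≤ m i) :
    volume {y : EuclideanSpace ℝ (Fin d) | ∀ i, |y i| ≤ m i} =
      ENNReal.ofReal (∏ i, (2 * m i)) := by
  rw [box_eq,
    (EuclideanSpace.volume_preserving_symm_measurableEquiv_toLp (Fin d)).measure_preimage
      ((MeasurableSet.univ_pi fun i => measurableSet_Icc).nullMeasurableSet),
    volume_pi_pi, ENNReal.ofReal_prod_of_nonneg fun i _ => by have := hm i; positivity]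
  refine Finset.prod_congr rfl fun i _ => ?_
  rw [Real.volume_Icc]
  congr 1
  ring


/-- Lemma 4.7: for a real invertible `d×d` matrix `A` and
`r₁, r₂ > 0`,
`𝓛_d((A⁻¹ B(0,r₁)) ∩ B(0,r₂)) ≤ 2^d min_{0≤k≤d} r₁^k r₂^{d-k} / φ^k(A)`. -/
theorem volume_preimage_ball_inter_ball
    {d : ℕ} (A : Mat d) (hA : IsUnit A.det)
    (r₁ r₂ : ℝ) (h₁ : 0 < r₁) (h₂ : 0 < r₂) :
    volume ((matCLM A ⁻¹' closedBall (0 : Euc d) r₁) ∩ closedBall (0 : Euc d) r₂) ≤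
      ENNReal.ofReal ((2 : ℝ) ^ d *
        ⨅ k : Fin (d + 1), r₁ ^ (k : ℕ) * r₂ ^ (d - (k : ℕ)) / svf ((k : ℕ) : ℝ) A) := by
  classical
  set H := Matrix.isHermitian_conjTranspose_mul_self A with hH
  set b := H.eigenvectorBasis with hb
  set μ := H.eigenvalues with hmu
  have hμpos : ∀ i, 0 < μ i := eigen_pos A hA
  set m : Fin d → ℝ := fun i => min (r₁ / Real.sqrt (μ i)) r₂ with hmdef
  have hm : ∀ i, 0 < m i := fun i => lt_min (div_pos h₁ (Real.sqrt_pos.2 (hμpos i))) h₂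
  -- singular values
  set v : Fin d → ℝ := fun i => Real.sqrt (μ i) with hvdef
  set e : Fin d ≃ Fin d := Fin.revPerm.trans (Tuple.sort v) with hedef
  have hsv : ∀ j : Fin d, singVals A j = v (e j) := fun j => rfl
  have hsvpos : ∀ j, 0 < singVals A j := fun j => by
    rw [hsv]; exact Real.sqrt_pos.2 (hμpos _)
  set sv : ℕ → ℝ := fun n => if h : n < d then singVals A ⟨n, h⟩ else 1 with hsvdef
  have hsvn : ∀ n, 0 < sv n := by
    intro n
    rw [hsvdef]
    dsimp only
    split
    · exact hsvpos _
    · exact one_pos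
  have hsvj : ∀ j : Fin d, sv (j : ℕ) = singVals A j := by
    intro j
    rw [hsvdef]
    dsimp only
    rw [dif_pos j.isLt]
  -- inclusion into a box
  have hsub : (matCLM A ⁻¹' closedBall (0 : Euc d) r₁) ∩ closedBall (0 : Euc d) r₂ ⊆
      ⇑b.repr ⁻¹' {y : EuclideanSpace ℝ (Fin d) | ∀ i, |y i| ≤ m i} := by
    rintro x ⟨hx1, hx2⟩
    rw [mem_preimage, mem_closedBall_zero_iff] at hx1
    rw [mem_closedBall_zero_iff] at hx2
    simp only [mem_preimage, mem_setOf_eq]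
    intro i
    refine le_min ?_ ?_
    · have h1 : μ i * (b.repr x i) ^ 2 ≤ r₁ ^ 2 := by
        calc μ i * (b.repr x i) ^ 2
            ≤ ∑ j, μ j * (b.repr x j) ^ 2 :=
              Finset.single_le_sum
                (fun j _ => mul_nonneg (hμpos j).le (sq_nonneg _)) (Finset.mem_univ i)
          _ = ‖matCLM A x‖ ^ 2 := (key_norm_sq A x).symm
          _ ≤ r₁ ^ 2 := pow_le_pow_left₀ (norm_nonneg _) hx1 2
      have h2 : Real.sqrt (μ i) * |b.repr x i| ≤ r₁ := by
        have h3 := Real.sqrt_le_sqrt h1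
        rwa [Real.sqrt_mul (hμpos i).le, Real.sqrt_sq_eq_abs, Real.sqrt_sq h₁.le] at h3
      rw [le_div_iff₀ (Real.sqrt_pos.2 (hμpos i)), mul_comm]
      exact h2
    · rw [b.repr_apply_apply x i]
      calc |(⟪b i, x⟫ : ℝ)| ≤ ‖b i‖ * ‖x‖ := abs_real_inner_le_norm _ _
        _ = ‖x‖ := by rw [b.orthonormal.1 i, one_mul]
        _ ≤ r₂ := hx2
  -- per-k bound
  have hk_ineq : ∀ k : Fin (d + 1), (∏ i, (2 * m i)) ≤
      2 ^ d * (r₁ ^ (k : ℕ) * r₂ ^ (d - (k : ℕ)) / svf ((k : ℕ) : ℝ) A) := by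
    intro k
    have hkd : (k : ℕ) ≤ d := Nat.lt_succ_iff.mp k.isLt
    have hprod1 : (∏ i, m i) = ∏ n ∈ Finset.range d, min (r₁ / sv n) r₂ := by
      rw [← Equiv.prod_comp e m, ← Fin.prod_univ_eq_prod_range (fun n => min (r₁ / sv n) r₂) d]
      refine Finset.prod_congr rfl fun j _ => ?_
      rw [hsvj j, hsv j]
    have hP : 0 < ∏ n ∈ Finset.range (k : ℕ), sv n :=
      Finset.prod_pos fun n _ => hsvn n
    have hsplit : (∏ n ∈ Finset.range d, min (r₁ / sv n) r₂) ≤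
        (r₁ ^ (k : ℕ) / ∏ n ∈ Finset.range (k : ℕ), sv n) * r₂ ^ (d - (k : ℕ)) := by
      calc (∏ n ∈ Finset.range d, min (r₁ / sv n) r₂)
          = (∏ n ∈ Finset.range (k : ℕ), min (r₁ / sv n) r₂) *
              ∏ n ∈ Finset.Ico (k : ℕ) d, min (r₁ / sv n) r₂ :=
            (Finset.prod_range_mul_prod_Ico _ hkd).symm
        _ ≤ (∏ n ∈ Finset.range (k : ℕ), r₁ / sv n) * ∏ n ∈ Finset.Ico (k : ℕ) d, r₂ := by
            refine mul_le_mul ?_ ?_ ?_ ?_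
            · exact Finset.prod_le_prod (fun n _ => (lt_min (div_pos h₁ (hsvn n)) h₂).le)
                (fun n _ => min_le_left _ _)
            · exact Finset.prod_le_prod (fun n _ => (lt_min (div_pos h₁ (hsvn n)) h₂).le)
                (fun n _ => min_le_right _ _)
            · exact Finset.prod_nonneg fun n _ => (lt_min (div_pos h₁ (hsvn n)) h₂).le
            · exact Finset.prod_nonneg fun n _ => (div_pos h₁ (hsvn n)).le
        _ = (r₁ ^ (k : ℕ) / ∏ n ∈ Finset.range (k : ℕ), sv n) * r₂ ^ (d - (k : ℕ)) := by
            rw [Finset.prod_div_distrib, Finset.prod_const, Finset.prod_const,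
              Finset.card_range, Nat.card_Ico]
    have hsvf : svf ((k : ℕ) : ℝ) A = ∏ n ∈ Finset.range (k : ℕ), sv n := by
      rcases lt_or_eq_of_le hkd with hlt | heq
      · simp only [svf, if_pos (show ((k : ℕ) : ℝ) < (d : ℝ) by exact_mod_cast hlt),
          Nat.floor_natCast, sub_self, Real.rpow_zero, ite_self]
        have hcong : ∀ j : Fin d,
            (if (j : ℕ) < (k : ℕ) then singVals A j else 1) =
              (fun n => if n < (k : ℕ) then sv n else 1) (j : ℕ) := by
          intro j
          dsimp only
          rw [hsvj j]
        rw [Finset.prod_congr rfl fun j _ => hcong j,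
          Fin.prod_univ_eq_prod_range (fun n => if n < (k : ℕ) then sv n else 1) d,
          ← Finset.prod_range_mul_prod_Ico _ hkd,
          Finset.prod_congr rfl (fun n hn => if_pos (Finset.mem_range.1 hn)),
          Finset.prod_eq_one (fun n hn => if_neg (not_lt.2 (Finset.mem_Ico.1 hn).1)), mul_one]
      · have hnotlt : ¬ ((k : ℕ) : ℝ) < (d : ℝ) := by rw [heq]; exact lt_irrefl _
        simp only [svf, if_neg hnotlt]
        have hPd : (∏ n ∈ Finset.range (k : ℕ), sv n) = ∏ j : Fin d, singVals A j := by
          rw [heq, ← Fin.prod_univ_eq_prod_range sv d]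
          exact Finset.prod_congr rfl fun j _ => hsvj j
        have hdet : ∏ j : Fin d, singVals A j = |A.det| := by
          have h1 : (∏ j : Fin d, singVals A j) = ∏ i, v i := by
            rw [Finset.prod_congr rfl fun j _ => hsv j]
            exact Equiv.prod_comp e v
          rw [h1, hvdef]
          rw [← sqrt_prod' Finset.univ μ fun i _ => (hμpos i).le, prod_eigen_eq,
            show A.det * A.det = A.det ^ 2 by ring, Real.sqrt_sq_eq_abs]
        rcases Nat.eq_zero_or_pos d with hd0 | hd0
        · have hk0 : (k : ℕ) = 0 := by omega
          simp [hk0, hd0, Real.rpow_zero]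
        · have hde : ((k : ℕ) : ℝ) / (d : ℝ) = 1 := by
            rw [heq]
            field_simp
          rw [hde, Real.rpow_one, hPd, hdet]
    calc (∏ i, (2 * m i)) = 2 ^ d * ∏ i, m i := by
          rw [Finset.prod_mul_distrib, Finset.prod_const]
          simp
      _ ≤ 2 ^ d * ((r₁ ^ (k : ℕ) / ∏ n ∈ Finset.range (k : ℕ), sv n) * r₂ ^ (d - (k : ℕ))) := by
          have := hprod1 ▸ hsplit
          exact mul_le_mul_of_nonneg_left this (by positivity)
      _ = 2 ^ d * (r₁ ^ (k : ℕ) * r₂ ^ (d - (k : ℕ)) / svf ((k : ℕ) : ℝ) A) := by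
          rw [hsvf]; ring
  -- assemble
  obtain ⟨k0, hk0⟩ := Finite.exists_min
    (fun k : Fin (d + 1) => r₁ ^ (k : ℕ) * r₂ ^ (d - (k : ℕ)) / svf ((k : ℕ) : ℝ) A)
  have hinf : (⨅ k : Fin (d + 1), r₁ ^ (k : ℕ) * r₂ ^ (d - (k : ℕ)) / svf ((k : ℕ) : ℝ) A) =
      r₁ ^ (k0 : ℕ) * r₂ ^ (d - (k0 : ℕ)) / svf ((k0 : ℕ) : ℝ) A :=
    le_antisymm (ciInf_le (Set.finite_range _).bddBelow k0) (le_ciInf hk0)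
  calc volume ((matCLM A ⁻¹' closedBall (0 : Euc d) r₁) ∩ closedBall (0 : Euc d) r₂)
      ≤ volume (⇑b.repr ⁻¹' {y : EuclideanSpace ℝ (Fin d) | ∀ i, |y i| ≤ m i}) :=
        measure_mono hsub
    _ = volume {y : EuclideanSpace ℝ (Fin d) | ∀ i, |y i| ≤ m i} :=
        b.measurePreserving_repr.measure_preimage (box_measurable m).nullMeasurableSet
    _ = ENNReal.ofReal (∏ i, (2 * m i)) := volume_box m fun i => (hm i).le
    _ ≤ ENNReal.ofReal ((2 : ℝ) ^ d *
          ⨅ k : Fin (d + 1), r₁ ^ (k : ℕ) * r₂ ^ (d - (k : ℕ)) / svf ((k : ℕ) : ℝ) A) := by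
        refine ENNReal.ofReal_le_ofReal ?_
        rw [hinf]
        exact hk_ineq k0
end IFSPaper
end
end

section
/- Let {𝓕^𝔱}_{𝔱∈Δ} be a translational family of IFSs on a compact set S ⊂ ℝ^d generated by a C^1 IFS 𝓕 = {f_i}_{i=1}^ℓ, with ρ_i := sup_{z∈S} ‖D_z f_i‖ and ρ := max_{i≠j}(ρ_i + ρ_j) < 1. Let a = (a_n), b = (b_n) ∈ Σ with a_1 = 1 and b_1 = 2, and for k ∈ {1,…,ℓ} and 𝔱 ∈ Δ define E_k(𝔱) = Σ_{n≥1, a_{n+1}=k} ∏_{i=1}^{n} D_{Π^𝔱(σ^i a)} f_{a_i} − Σ_{n≥1, b_{n+1}=k} ∏_{i=1}^{n} D_{Π^𝔱(σ^i b)} f_{b_i}, where ∏_{i=1}^{n} D_{Π^𝔱(σ^i a)} f_{a_i} denotes the ordered product D_{Π^𝔱(σ a)} f_{a_1} · D_{Π^𝔱(σ^2 a)} f_{a_2} ⋯ D_{Π^𝔱(σ^n a)} f_{a_n}. Then there exists k* ∈ {1,2}, depending only on a and b, such that ‖E_{k*}(𝔱)‖ < ρ for all 𝔱 ∈ Δ.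 -/
open MeasureTheory Filter Set Metric
open scoped Topology ENNReal NNReal Matrix

noncomputable section

namespace IFSPaper

/-- The conditions for `f` (with Jacobians `Df`) to be a `C¹` IFS on the compact set `Z`:
each map sends `Z` into itself and extends to a contracting `C¹` diffeomorphism of the
open set `U ⊇ Z` into itself. -/
def IsC1IFS {ℓ d : ℕ} (Z U : Set (Euc d)) (f : Fin ℓ → Euc d → Euc d)
    (Df : Fin ℓ → Euc d → Mat d) : Prop :=
  IsCompact Z ∧ Z.Nonempty ∧ IsOpen U ∧ Z ⊆ U ∧
  ∀ i : Fin ℓ,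
    MapsTo (f i) Z Z ∧ MapsTo (f i) U U ∧ InjOn (f i) U ∧
    (∀ x ∈ U, HasFDerivAt (f i) (matCLM (Df i x)) x) ∧
    ContinuousOn (fun x => matCLM (Df i x)) U ∧
    (∀ x ∈ U, IsUnit (Df i x).det) ∧
    ∃ ρ : ℝ, ρ < 1 ∧ ∀ x ∈ U, opNorm (Df i x) ≤ ρ

/-- The parameter space `ℝ^{ℓd}` of translations, with the Euclidean norm. -/
abbrev Par (ℓ d : ℕ) : Type := EuclideanSpace ℝ (Fin ℓ × Fin d)

/-- The `i`-th translation component `tᵢ ∈ ℝ^d` of `𝔱 ∈ ℝ^{ℓd}`. -/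
def trVec {ℓ d : ℕ} (𝔱 : Par ℓ d) (i : Fin ℓ) : Euc d :=
  (WithLp.equiv 2 (Fin d → ℝ)).symm fun j => 𝔱 (i, j)

/-- The translated IFS `𝓕^𝔱 = {f_i + tᵢ}`. -/
def trIFS {ℓ d : ℕ} (f : Fin ℓ → Euc d → Euc d) (𝔱 : Par ℓ d) : Fin ℓ → Euc d → Euc d :=
  fun i x => f i x + trVec 𝔱 i

/-- The ordered product `∏_{i=1}^{n} D_{Π(σ^i a)} f_{a_i}
  = D_{Π(σ a)} f_{a₁} ⋅ D_{Π(σ² a)} f_{a₂} ⋯ D_{Π(σⁿ a)} f_{aₙ}`. -/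
def ordProd {ℓ d : ℕ} (Df : Fin ℓ → Euc d → Mat d) (P : Seq ℓ → Euc d)
    (a : Seq ℓ) : ℕ → Mat d
  | 0 => 1
  | n + 1 => ordProd Df P a n * Df (a n) (P fun k => a (k + (n + 1)))

/-- The matrix `E_k(𝔱)` of Lemma 4.8:
`E_k(𝔱) = Σ_{n≥1, a_{n+1}=k} ∏_{i=1}^n D_{Π^𝔱(σ^i a)} f_{a_i}
        − Σ_{n≥1, b_{n+1}=k} ∏_{i=1}^n D_{Π^𝔱(σ^i b)} f_{b_i}`. -/
def Efun {ℓ d : ℕ} (f : Fin ℓ → Euc d → Euc d) (Df : Fin ℓ → Euc d → Mat d)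
    (a b : Seq ℓ) (k : Fin ℓ) (𝔱 : Par ℓ d) : Mat d :=
  (∑' n : ℕ, if 1 ≤ n ∧ a n = k then ordProd Df (codingMap (trIFS f 𝔱)) a n else 0) -
    ∑' n : ℕ, if 1 ≤ n ∧ b n = k then ordProd Df (codingMap (trIFS f 𝔱)) b n else 0


section AuxLemmas

variable {ℓ d : ℕ}

lemma opNorm_nonneg' {d : ℕ} (A : Mat d) : 0 ≤ opNorm A := norm_nonneg _

lemma opNorm_mul_le' {d : ℕ} (A B : Mat d) : opNorm (A * B) ≤ opNorm A * opNorm B := by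
  unfold opNorm matCLM
  rw [map_mul]
  exact norm_mul_le _ _

lemma opNorm_one_le' {d : ℕ} : opNorm (1 : Mat d) ≤ 1 := by
  unfold opNorm matCLM
  rw [map_one]
  exact ContinuousLinearMap.norm_id_le

lemma opNorm_zero' {d : ℕ} : opNorm (0 : Mat d) = 0 := by
  unfold opNorm matCLM
  rw [map_zero, norm_zero]

lemma opNorm_sub_le' {d : ℕ} (A B : Mat d) : opNorm (A - B) ≤ opNorm A + opNorm B := by
  unfold opNorm matCLM
  rw [map_sub]
  exact norm_sub_le _ _

/-- The matrix-to-CLM map as a continuous linear equivalence. -/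
noncomputable def matCLE (d : ℕ) : Mat d ≃L[ℝ] (Euc d →L[ℝ] Euc d) :=
  LinearEquiv.toContinuousLinearEquiv
    { toFun := fun A => Matrix.toEuclideanCLM (𝕜 := ℝ) A
      invFun := fun T => (Matrix.toEuclideanCLM (𝕜 := ℝ)).symm T
      left_inv := fun A => by simp
      right_inv := fun T => by simp
      map_add' := fun A B => by simp
      map_smul' := fun c A => by simp }

lemma matCLE_apply {d : ℕ} (A : Mat d) : matCLE d A = matCLM A := rfl

lemma opNorm_tsum_le' {d : ℕ} (g : ℕ → Mat d) (u : ℕ → ℝ) (hsum : Summable u)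
    (hle : ∀ n, opNorm (g n) ≤ u n) : opNorm (∑' n, g n) ≤ ∑' n, u n := by
  have h1 : matCLM (∑' n, g n) = ∑' n, matCLM (g n) := by
    have h := (matCLE d).map_tsum (f := g) (L := SummationFilter.unconditional ℕ)
    simpa [matCLE_apply] using h
  have hsnorm : Summable fun n => ‖matCLM (g n)‖ :=
    Summable.of_nonneg_of_le (fun n => norm_nonneg _) (fun n => hle n) hsum
  calc opNorm (∑' n, g n) = ‖∑' n, matCLM (g n)‖ := by rw [opNorm, h1]
    _ ≤ ∑' n, ‖matCLM (g n)‖ := norm_tsum_le_tsum_norm hsnorm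
    _ ≤ ∑' n, u n := hsnorm.tsum_le_tsum (fun n => hle n) hsum

/-- Weight of a prefix: the product of the bounds `r` along the first `n` letters. -/
def prWt (r : Fin ℓ → ℝ) (x : Seq ℓ) (n : ℕ) : ℝ := ∏ i ∈ Finset.range n, r (x i)

lemma prWt_nonneg {r : Fin ℓ → ℝ} (hr : ∀ c, 0 ≤ r c) (x : Seq ℓ) (n : ℕ) :
    0 ≤ prWt r x n := Finset.prod_nonneg fun _ _ => hr _

lemma prWt_zero (r : Fin ℓ → ℝ) (x : Seq ℓ) : prWt r x 0 = 1 := by simp [prWt]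

lemma prWt_succ (r : Fin ℓ → ℝ) (x : Seq ℓ) (n : ℕ) :
    prWt r x (n + 1) = prWt r x n * r (x n) := Finset.prod_range_succ _ _

lemma prWt_succ' (r : Fin ℓ → ℝ) (x : Seq ℓ) (n : ℕ) :
    prWt r x (n + 1) = r (x 0) * prWt r (fun m => x (m + 1)) n := by
  rw [prWt, Finset.prod_range_succ' (fun i => r (x i)) n, mul_comm]
  rfl

lemma prWt_le_pow {r : Fin ℓ → ℝ} {ρ : ℝ} (hr : ∀ c, 0 ≤ r c) (hrρ : ∀ c, r c ≤ ρ)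
    (x : Seq ℓ) (n : ℕ) : prWt r x n ≤ ρ ^ n := by
  calc prWt r x n ≤ ∏ _i ∈ Finset.range n, ρ :=
        Finset.prod_le_prod (fun _ _ => hr _) (fun _ _ => hrρ _)
    _ = ρ ^ n := by rw [Finset.prod_const, Finset.card_range]

lemma claimD {r w : Fin ℓ → ℝ} (hw : ∀ c, 0 ≤ w c) (hr : ∀ c, 0 ≤ r c)
    (hwr : ∀ c, w c + r c ≤ 1) :
    ∀ (N : ℕ) (x : Seq ℓ), ∑ n ∈ Finset.range N, w (x n) * prWt r x n ≤ 1 := by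
  intro N
  induction N with
  | zero => intro x; simp
  | succ N ih =>
    intro x
    rw [Finset.sum_range_succ' (fun n => w (x n) * prWt r x n) N]
    have h1 : ∀ n, w (x (n + 1)) * prWt r x (n + 1)
        = r (x 0) * (w ((fun m => x (m + 1)) n) * prWt r (fun m => x (m + 1)) n) := by
      intro n; rw [prWt_succ']; ring
    have hih := ih (fun m => x (m + 1))
    have hsum0 : (0:ℝ) ≤ ∑ n ∈ Finset.range N,
        w ((fun m => x (m + 1)) n) * prWt r (fun m => x (m + 1)) n :=
      Finset.sum_nonneg fun n _ => mul_nonneg (hw _) (prWt_nonneg hr _ _)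
    calc (∑ n ∈ Finset.range N, w (x (n + 1)) * prWt r x (n + 1)) + w (x 0) * prWt r x 0
        = r (x 0) * (∑ n ∈ Finset.range N,
            w ((fun m => x (m + 1)) n) * prWt r (fun m => x (m + 1)) n) + w (x 0) := by
          rw [Finset.mul_sum, prWt_zero, mul_one]
          congr 1
          exact Finset.sum_congr rfl fun n _ => h1 n
      _ ≤ r (x 0) * 1 + w (x 0) := by
          have := hr (x 0)
          nlinarith
      _ ≤ 1 := by have := hwr (x 0); linarith

lemma claimV {r w : Fin ℓ → ℝ} (hw : ∀ c, 0 ≤ w c) (hr : ∀ c, 0 ≤ r c)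
    (hwr : ∀ c, w c + r c ≤ 1) (N : ℕ) (x : Seq ℓ) :
    ∑ n ∈ Finset.range N, (if 1 ≤ n then w (x n) * prWt r x n else 0) ≤ r (x 0) := by
  cases N with
  | zero => simpa using hr (x 0)
  | succ N =>
    rw [Finset.sum_range_succ' (fun n => if 1 ≤ n then w (x n) * prWt r x n else 0) N]
    have h0 : (if (1:ℕ) ≤ 0 then w (x 0) * prWt r x 0 else 0) = 0 := by norm_num
    have h1 : ∀ n : ℕ, (if 1 ≤ n + 1 then w (x n.succ) * prWt r x (n + 1) else 0)
        = r (x 0) * (w ((fun m => x (m + 1)) n) * prWt r (fun m => x (m + 1)) n) := by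
      intro n
      rw [if_pos (Nat.succ_le_succ (Nat.zero_le n)), prWt_succ']
      ring
    rw [h0, add_zero]
    calc ∑ n ∈ Finset.range N, (if 1 ≤ n + 1 then w (x (n + 1)) * prWt r x (n + 1) else 0)
        = r (x 0) * ∑ n ∈ Finset.range N,
            w ((fun m => x (m + 1)) n) * prWt r (fun m => x (m + 1)) n := by
          rw [Finset.mul_sum]
          exact Finset.sum_congr rfl fun n _ => h1 n
      _ ≤ r (x 0) * 1 := mul_le_mul_of_nonneg_left (claimD hw hr hwr N _) (hr _)
      _ = r (x 0) := mul_one _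

end AuxLemmas

/-- Lemma 4.8: in a translational family generated by a `C¹` IFS with
`ρ = max_{i≠j}(ρ_i + ρ_j) < 1` (where `ρ_i = sup_{z∈S} ‖D_z f_i‖`), for `a, b ∈ Σ`
with `a₁ = 1` and `b₁ = 2` there exists `k* ∈ {1, 2}` (depending only on `a, b`) with
`‖E_{k*}(𝔱)‖ < ρ` for all `𝔱 ∈ Δ`. -/
theorem exists_good_index_Efun
    {d ℓ : ℕ} (hd : 0 < d) (hℓ : 2 ≤ ℓ)
    (S U : Set (Euc d))
    (f : Fin ℓ → Euc d → Euc d) (Df : Fin ℓ → Euc d → Mat d)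
    (hIFS : IsC1IFS S U f Df)
    (hint : ∀ i, MapsTo (f i) S (interior S))
    -- `ρ = max_{i ≠ j} (ρ_i + ρ_j) < 1` where `ρ_i = sup_{z ∈ S} ‖D_z f_i‖`
    (ρ : ℝ)
    (hρdef : ρ = ⨆ p : {p : Fin ℓ × Fin ℓ // p.1 ≠ p.2},
      (⨆ z : S, opNorm (Df (p : Fin ℓ × Fin ℓ).1 z)) +
        ⨆ z : S, opNorm (Df (p : Fin ℓ × Fin ℓ).2 z))
    (hρ : ρ < 1)
    (r₀ : ℝ) (hr₀ : 0 < r₀)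
    (hr₀S : ∀ 𝔱 : Par ℓ d, ‖𝔱‖ < r₀ → ∀ i, MapsTo (trIFS f 𝔱 i) S (interior S))
    (hPi : ∀ 𝔱 : Par ℓ d, ‖𝔱‖ < r₀ → ∀ x : Seq ℓ,
      codingMap (trIFS f 𝔱) x ∈ S ∧
      Tendsto (fun n => wordComp (trIFS f 𝔱) (prefixWord x n) (0 : Euc d)) atTop
        (𝓝 (codingMap (trIFS f 𝔱) x)))
    (a b : Seq ℓ) (ha : (a 0 : ℕ) = 0) (hb : (b 0 : ℕ) = 1) :
    ∃ kstar : Fin ℓ, ((kstar : ℕ) = 0 ∨ (kstar : ℕ) = 1) ∧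
      ∀ 𝔱 : Par ℓ d, ‖𝔱‖ < r₀ → opNorm (Efun f Df a b kstar 𝔱) < ρ := by
  classical
  obtain ⟨hScomp, hSne, hUopen, hSU, hmaps⟩ := hIFS
  haveI : Nonempty (Fin d) := Fin.pos_iff_nonempty.mp hd
  haveI : Nonempty ↥S := hSne.to_subtype
  set r : Fin ℓ → ℝ := fun i => ⨆ z : S, opNorm (Df i z) with hrdef
  have i0lt : 0 < ℓ := by omega
  have i1lt : 1 < ℓ := by omega
  set i0 : Fin ℓ := ⟨0, i0lt⟩ with hi0
  set i1 : Fin ℓ := ⟨1, i1lt⟩ with hi1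
  have hne01 : i0 ≠ i1 := by
    intro h
    have : (0 : ℕ) = 1 := congrArg Fin.val h
    omega
  have hbdd : ∀ i : Fin ℓ, BddAbove (Set.range fun z : S => opNorm (Df i z)) := by
    intro i
    obtain ⟨ρU, _hρU1, hρUb⟩ := (hmaps i).2.2.2.2.2.2
    exact ⟨ρU, by rintro _ ⟨z, rfl⟩; exact hρUb z (hSU z.2)⟩
  have hrle : ∀ (i : Fin ℓ) (z : Euc d), z ∈ S → opNorm (Df i z) ≤ r i := by
    intro i z hz
    exact le_ciSup (hbdd i) (⟨z, hz⟩ : S)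
  have hrlt1 : ∀ i, r i < 1 := by
    intro i
    obtain ⟨ρU, hρU1, hρUb⟩ := (hmaps i).2.2.2.2.2.2
    exact lt_of_le_of_lt (ciSup_le fun z => hρUb z (hSU z.2)) hρU1
  have hrpos : ∀ i, 0 < r i := by
    intro i
    obtain ⟨z0, hz0⟩ := hSne
    refine lt_of_lt_of_le ?_ (hrle i z0 hz0)
    have hdet := (hmaps i).2.2.2.2.2.1 z0 (hSU hz0)
    have hmatne : Df i z0 ≠ 0 := by
      intro h
      rw [h, Matrix.det_zero] at hdet
      exact not_isUnit_zero hdet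
    have hclmne : matCLM (Df i z0) ≠ 0 := by
      intro h
      apply hmatne
      have h2 := congrArg (matCLE d).symm (matCLE_apply (Df i z0) ▸
        (h.trans (map_zero (matCLE d)).symm) : matCLE d (Df i z0) = matCLE d 0)
      simpa using h2
    simpa [opNorm] using norm_pos_iff.mpr hclmne
  have hrnonneg : ∀ i, 0 ≤ r i := fun i => (hrpos i).le
  have hpair : ∀ i j : Fin ℓ, i ≠ j → r i + r j ≤ ρ := by
    intro i j hij
    rw [hρdef]
    exact le_ciSup (f := fun p : {p : Fin ℓ × Fin ℓ // p.1 ≠ p.2} =>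
        (⨆ z : S, opNorm (Df (p : Fin ℓ × Fin ℓ).1 z)) +
          ⨆ z : S, opNorm (Df (p : Fin ℓ × Fin ℓ).2 z))
      (Set.Finite.bddAbove (Set.finite_range _)) ⟨(i, j), hij⟩
  have hrρ : ∀ i, r i ≤ ρ := by
    intro i
    by_cases h : i = i0
    · have := hpair i i1 (by rw [h]; exact hne01)
      have := hrnonneg i1
      linarith
    · have := hpair i i0 h
      have := hrnonneg i0
      linarith
  have hρpos : 0 < ρ :=
    lt_of_lt_of_le (add_pos (hrpos i0) (hrpos i1)) (hpair i0 i1 hne01)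
  -- the scalar majorant series
  set u : Fin ℓ → Seq ℓ → ℕ → ℝ :=
    fun k x n => if 1 ≤ n ∧ x n = k then prWt r x n else 0 with hu
  have hunn : ∀ k x n, 0 ≤ u k x n := by
    intro k x n
    rw [hu]
    dsimp only
    split
    · exact prWt_nonneg hrnonneg _ _
    · exact le_refl 0
  have hule : ∀ k x n, u k x n ≤ ρ ^ n := by
    intro k x n
    rw [hu]
    dsimp only
    split
    · exact prWt_le_pow hrnonneg hrρ x n
    · positivity
  have husum : ∀ k x, Summable (u k x) := fun k x =>
    Summable.of_nonneg_of_le (hunn k x) (hule k x)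
      (summable_geometric_of_lt_one hρpos.le hρ)
  set Sv : Fin ℓ → Seq ℓ → ℝ := fun k x => ∑' n, u k x n with hSv
  -- bound on the ordered products
  have hord : ∀ (𝔱 : Par ℓ d), ‖𝔱‖ < r₀ → ∀ (x : Seq ℓ) (n : ℕ),
      opNorm (ordProd Df (codingMap (trIFS f 𝔱)) x n) ≤ prWt r x n := by
    intro 𝔱 h𝔱 x n
    induction n with
    | zero =>
      rw [prWt_zero]
      exact opNorm_one_le'
    | succ n ih =>
      have hmem := (hPi 𝔱 h𝔱 (fun m => x (m + (n + 1)))).1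
      have hDf := hrle (x n) _ hmem
      calc opNorm (ordProd Df (codingMap (trIFS f 𝔱)) x (n + 1))
          ≤ opNorm (ordProd Df (codingMap (trIFS f 𝔱)) x n) *
              opNorm (Df (x n) (codingMap (trIFS f 𝔱) fun m => x (m + (n + 1)))) :=
            opNorm_mul_le' _ _
        _ ≤ prWt r x n * r (x n) := by
            apply mul_le_mul ih hDf (opNorm_nonneg' _) (prWt_nonneg hrnonneg _ _)
        _ = prWt r x (n + 1) := (prWt_succ r x n).symm
  -- bound on E_k
  have hEbound : ∀ (k : Fin ℓ) (𝔱 : Par ℓ d), ‖𝔱‖ < r₀ →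
      opNorm (Efun f Df a b k 𝔱) ≤ Sv k a + Sv k b := by
    intro k 𝔱 h𝔱
    have hX : ∀ x : Seq ℓ,
        opNorm (∑' n : ℕ, if 1 ≤ n ∧ x n = k then
          ordProd Df (codingMap (trIFS f 𝔱)) x n else 0) ≤ Sv k x := by
      intro x
      apply opNorm_tsum_le' _ _ (husum k x)
      intro n
      by_cases h : 1 ≤ n ∧ x n = k
      · rw [if_pos h, hu]
        dsimp only
        rw [if_pos h]
        exact hord 𝔱 h𝔱 x n
      · rw [if_neg h, hu]
        dsimp only
        rw [if_neg h, opNorm_zero']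
    calc opNorm (Efun f Df a b k 𝔱)
        ≤ opNorm (∑' n : ℕ, if 1 ≤ n ∧ a n = k then
            ordProd Df (codingMap (trIFS f 𝔱)) a n else 0) +
          opNorm (∑' n : ℕ, if 1 ≤ n ∧ b n = k then
            ordProd Df (codingMap (trIFS f 𝔱)) b n else 0) := opNorm_sub_le' _ _
      _ ≤ Sv k a + Sv k b := add_le_add (hX a) (hX b)
  -- the weight function
  set w : Fin ℓ → ℝ := fun c => if c = i0 then 1 - r i0 else if c = i1 then 1 - r i1 else 0
    with hwdef
  have hwn : ∀ c, 0 ≤ w c := by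
    intro c
    rw [hwdef]
    dsimp only
    split_ifs with h h2
    · subst h; linarith [hrlt1 i0]
    · subst h2; linarith [hrlt1 i1]
    · exact le_refl 0
  have hwr : ∀ c, w c + r c ≤ 1 := by
    intro c
    rw [hwdef]
    dsimp only
    split_ifs with h h2
    · subst h; linarith
    · subst h2; linarith
    · linarith [hrlt1 c]
  have hpoint : ∀ (x : Seq ℓ) (n : ℕ),
      (1 - r i0) * u i0 x n + (1 - r i1) * u i1 x n
        = if 1 ≤ n then w (x n) * prWt r x n else 0 := by
    intro x n
    by_cases hn : 1 ≤ n
    · by_cases h0 : x n = i0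
      · have h1 : x n ≠ i1 := by rw [h0]; exact hne01
        rw [hu, hwdef]
        dsimp only
        rw [if_pos ⟨hn, h0⟩, if_neg (by exact fun hc => h1 hc.2), if_pos hn, h0,
          if_pos rfl]
        ring
      · by_cases h1 : x n = i1
        · rw [hu, hwdef]
          dsimp only
          rw [if_neg (by exact fun hc => h0 hc.2), if_pos ⟨hn, h1⟩, if_pos hn, h1,
            if_neg hne01.symm, if_pos rfl]
          ring
        · rw [hu, hwdef]
          dsimp only
          rw [if_neg (by exact fun hc => h0 hc.2), if_neg (by exact fun hc => h1 hc.2),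
            if_pos hn, if_neg h0, if_neg h1]
          ring
    · rw [hu]
      dsimp only
      rw [if_neg (by exact fun hc => hn hc.1), if_neg (by exact fun hc => hn hc.1),
        if_neg hn]
      ring
  have hstar : ∀ x : Seq ℓ, (1 - r i0) * Sv i0 x + (1 - r i1) * Sv i1 x ≤ r (x 0) := by
    intro x
    have hsum1 := (husum i0 x).mul_left (1 - r i0)
    have hsum2 := (husum i1 x).mul_left (1 - r i1)
    have heq : (1 - r i0) * Sv i0 x + (1 - r i1) * Sv i1 x
        = ∑' n, ((1 - r i0) * u i0 x n + (1 - r i1) * u i1 x n) := by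
      rw [hSv]
      dsimp only
      rw [Summable.tsum_add hsum1 hsum2, tsum_mul_left, tsum_mul_left]
    rw [heq]
    have heq2 : (fun n => (1 - r i0) * u i0 x n + (1 - r i1) * u i1 x n)
        = fun n => if 1 ≤ n then w (x n) * prWt r x n else 0 := funext (hpoint x)
    rw [heq2]
    refine Summable.tsum_le_of_sum_range_le ?_ (fun N => claimV hwn hrnonneg hwr N x)
    rw [← heq2]
    exact hsum1.add hsum2
  have ha0 : a 0 = i0 := Fin.val_injective (by simpa using ha)
  have hb0 : b 0 = i1 := Fin.val_injective (by simpa using hb)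
  by_cases hc0 : Sv i0 a + Sv i0 b < ρ
  · exact ⟨i0, Or.inl rfl, fun 𝔱 h𝔱 => lt_of_le_of_lt (hEbound i0 𝔱 h𝔱) hc0⟩
  by_cases hc1 : Sv i1 a + Sv i1 b < ρ
  · exact ⟨i1, Or.inr rfl, fun 𝔱 h𝔱 => lt_of_le_of_lt (hEbound i1 𝔱 h𝔱) hc1⟩
  exfalso
  push_neg at hc0 hc1
  have H1 := hstar a
  have H2 := hstar b
  rw [ha0] at H1
  rw [hb0] at H2
  have h10 : (0:ℝ) ≤ 1 - r i0 := by linarith [hrlt1 i0]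
  have h11 : (0:ℝ) ≤ 1 - r i1 := by linarith [hrlt1 i1]
  have e1 : (1 - r i0) * ρ ≤ (1 - r i0) * (Sv i0 a + Sv i0 b) :=
    mul_le_mul_of_nonneg_left hc0 h10
  have e2 : (1 - r i1) * ρ ≤ (1 - r i1) * (Sv i1 a + Sv i1 b) :=
    mul_le_mul_of_nonneg_left hc1 h11
  have hRρ : r i0 + r i1 ≤ ρ := hpair i0 i1 hne01
  nlinarith [mul_pos hρpos (show (0:ℝ) < 1 - r i0 - r i1 by linarith), H1, H2, e1, e2]
end IFSPaper
end
end
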